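/- For every real v with 0 ≤ v ≤ 1, every real b with c₁ ≤ b ≤ c₂ (0 < c₁ ≤ c₂ fixed), every real u ≥ 1, and every constant C > 0, one has (1 + C·v)·(1 - v²/2)^(b·u) ≤ 1 + C'/u for some constant C' depending only on c₁, c₂, C. In particular the product of (1+O(v)) and (1-v²/2)^{bu} is at most 1 + O(1/u) uniformly in 0 ≤ v ≤ 1. -/

import Mathlib

open Real

theorem stmt6 (c₁ c₂ C : ℝ) (hc₁ : 0 < c₁) (hc : c₁ ≤ c₂) (hC : 0 < C) :
    ∃ C' > 0, ∀ v b u : ℝ, 0 ≤ v → v ≤ 1 → c₁ ≤ b → b ≤ c₂ → 1 ≤ u →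
      (1 + C * v) * (1 - v ^ 2 / 2) ^ (b * u) ≤ 1 + C' / u := by
  refine ⟨C ^ 2 / (2 * c₁) + 1, by positivity, fun v b u hv0 hv1 hb1 hb2 hu => ?_⟩
  have hu0 : (0:ℝ) < u := lt_of_lt_of_le one_pos hu
  have hb0 : 0 < b := lt_of_lt_of_le hc₁ hb1
  have hbu : 0 ≤ b * u := by positivity
  have hx : (0:ℝ) ≤ 1 - v ^ 2 / 2 := by nlinarith
  set y := v ^ 2 / 2 * (b * u) with hy
  have hy0 : 0 ≤ y := by positivity
  have h1 : (1 - v ^ 2 / 2 : ℝ) ^ (b * u) ≤ Real.exp (-(v ^ 2 / 2)) ^ (b * u) := by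
    apply Real.rpow_le_rpow hx _ hbu
    nlinarith [Real.add_one_le_exp (-(v ^ 2 / 2))]
  have h2 : Real.exp (-(v ^ 2 / 2)) ^ (b * u) = Real.exp (-y) := by
    rw [← Real.exp_mul, hy]; ring_nf
  have h3 : Real.exp (-y) ≤ 1 / (1 + y) := by
    rw [Real.exp_neg, one_div]
    exact inv_anti₀ (by linarith) (by linarith [Real.add_one_le_exp y])
  have hpos : (0:ℝ) < 1 + y := by linarith
  have hA : (1 + C * v) * (1 - v ^ 2 / 2) ^ (b * u) ≤ (1 + C * v) / (1 + y) := by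
    have := mul_le_mul_of_nonneg_left ((h1.trans_eq h2).trans h3)
      (show (0:ℝ) ≤ 1 + C * v by positivity)
    calc (1 + C * v) * (1 - v ^ 2 / 2) ^ (b * u) ≤ (1 + C * v) * (1 / (1 + y)) := this
      _ = (1 + C * v) / (1 + y) := by ring
  refine hA.trans ?_
  rw [div_le_iff₀ hpos]
  have hyge : c₁ * u * v ^ 2 / 2 ≤ y := by
    have : c₁ * u ≤ b * u := by nlinarith
    rw [hy]; nlinarith [sq_nonneg v]
  have key : C * v ≤ C ^ 2 / (2 * c₁) / u + c₁ * u * v ^ 2 / 2 := by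
    rw [div_add' _ _ _ (ne_of_gt hu0), le_div_iff₀ hu0]
    have h2c : (0:ℝ) < 2 * c₁ := by linarith
    rw [div_mul_eq_mul_div, div_add' _ _ _ (ne_of_gt h2c), le_div_iff₀ h2c]
    nlinarith [sq_nonneg (c₁ * u * v - C)]
  have hCu : 0 ≤ (C ^ 2 / (2 * c₁) + 1) / u := by positivity
  have hexp : (1 + (C ^ 2 / (2 * c₁) + 1) / u) * (1 + y)
      = 1 + (C ^ 2 / (2 * c₁) + 1) / u + y + (C ^ 2 / (2 * c₁) + 1) / u * y := by ring
  have h1u : (1:ℝ) / u ≤ 1 := by rw [div_le_one hu0]; exact hu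
  have hsplit : (C ^ 2 / (2 * c₁) + 1) / u = C ^ 2 / (2 * c₁) / u + 1 / u := by ring
  have h1up : (0:ℝ) ≤ 1 / u := by positivity
  linarith [mul_nonneg hCu hy0]
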